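/- Let 𝒯 be a countable subgroup of (ℝ^d, +), let the measurable set Ω ⊆ ℝ^d tile ℝ^d by 𝒯, let γ : ℝ^d → 𝒯 be measurable with x − γ(x) ∈ Ω for almost every x, and define (U(t)f)(x) = f(x + t − γ(x + t)) for f ∈ L²(Ω), x ∈ Ω, t ∈ ℝ^d. Then for every f ∈ L¹(Ω)∩L²(Ω), every t ∈ ℝ^d and every γ* in the dual set 𝒯* = {γ* ∈ ℝ^d : γ*·γ ∈ ℤ for all γ ∈ 𝒯}, one has ∫_Ω (U(t)f)(x) e^{−2πi γ*·x} dx = e^{2πi γ*·t} ∫_Ω f(x) e^{−2πi γ*·x} dx. -/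

import Mathlib

open MeasureTheory

private lemma aux_ae_add {d : ℕ} {P : (Fin d → ℝ) → Prop}
    (h : ∀ᵐ w ∂(volume : Measure (Fin d → ℝ)), P w) (v : Fin d → ℝ) :
    ∀ᵐ y ∂(volume : Measure (Fin d → ℝ)), P (y + v) := by
  rw [ae_iff] at h ⊢
  exact (measurePreserving_add_right (volume : Measure (Fin d → ℝ)) v).quasiMeasurePreserving.preimage_null h

private lemma aux_unique {ι : Type*} [Countable ι] (u : ι → ℝ)
    (h01 : ∀ i, u i = 0 ∨ u i = 1) (hsum : ∑' i, u i = 1) : ∃! i, u i = 1 := by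
  classical
  have hS : Summable u := by
    by_contra hS
    rw [tsum_eq_zero_of_not_summable hS] at hsum
    exact one_ne_zero hsum.symm
  have hnn : ∀ i, (0:ℝ) ≤ u i := fun i => (h01 i).elim (fun h => h ▸ le_refl _) (fun h => h ▸ zero_le_one)
  have hex : ∃ i, u i = 1 := by
    by_contra hne
    push_neg at hne
    have h0 : ∀ i, u i = 0 := fun i => (h01 i).resolve_right (hne i)
    rw [show u = fun _ => (0:ℝ) from funext h0, tsum_zero] at hsum
    exact one_ne_zero hsum.symm
  obtain ⟨i, hi⟩ := hex
  refine ⟨i, hi, fun j hj => ?_⟩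
  by_contra hij
  have hle := Summable.sum_le_tsum ({j, i} : Finset ι) (fun k _ => hnn k) hS
  rw [Finset.sum_pair hij, hi, hj, hsum] at hle
  linarith

theorem statement15 (d : ℕ) (T : AddSubgroup (Fin d → ℝ))
    (hTc : (T : Set (Fin d → ℝ)).Countable)
    (Ω : Set (Fin d → ℝ)) (hΩ : MeasurableSet Ω)
    (htile : ∀ᵐ x ∂(volume : Measure (Fin d → ℝ)),
      ∑' τ : T, Set.indicator Ω (fun _ => (1 : ℝ)) (x - (τ : Fin d → ℝ)) = 1)
    (γ : (Fin d → ℝ) → (Fin d → ℝ)) (hγmeas : Measurable γ)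
    (hγT : ∀ x, γ x ∈ T)
    (hγΩ : ∀ᵐ x ∂(volume : Measure (Fin d → ℝ)), x - γ x ∈ Ω)
    (f : (Fin d → ℝ) → ℂ)
    (hf1 : Integrable f (volume.restrict Ω))
    (hf2 : MemLp f 2 (volume.restrict Ω))
    (t : Fin d → ℝ) (γs : Fin d → ℝ)
    (hγs : ∀ g ∈ T, ∃ n : ℤ, (∑ i, γs i * g i) = (n : ℝ)) :
    ∫ x in Ω, f (x + t - γ (x + t)) *
        Complex.exp ((((-2) * Real.pi * (∑ i, γs i * x i) : ℝ) : ℂ) * Complex.I)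
      = Complex.exp (((2 * Real.pi * (∑ i, γs i * t i) : ℝ) : ℂ) * Complex.I) *
        ∫ x in Ω, f x *
          Complex.exp ((((-2) * Real.pi * (∑ i, γs i * x i) : ℝ) : ℂ) * Complex.I) := by
  classical
  haveI : Countable T := hTc.to_subtype
  set Φ : (Fin d → ℝ) → (Fin d → ℝ) := fun x => x + t - γ (x + t) with hΦ
  have hadd : Measurable fun x : Fin d → ℝ => x + t := measurable_id.add_const t
  have hΦmeas : Measurable Φ := hadd.sub (hγmeas.comp hadd)
  -- the partition sets on the source side
  set A : T → Set (Fin d → ℝ) := fun τ => (fun x => γ (x + t)) ⁻¹' {(τ : Fin d → ℝ)} with hA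
  have hAmeas : ∀ τ, MeasurableSet (A τ) :=
    fun τ => (hγmeas.comp hadd) (measurableSet_singleton _)
  -- the corresponding sets on the target side
  set C : T → Set (Fin d → ℝ) := fun τ => (fun y => y - (t - (τ : Fin d → ℝ))) ⁻¹' (Ω ∩ A τ) with hC
  have hCmeas : ∀ τ, MeasurableSet (C τ) :=
    fun τ => (measurable_id.sub_const _) (hΩ.inter (hAmeas τ))
  have hmemC : ∀ (τ : T) (y : Fin d → ℝ),
      y ∈ C τ ↔ (y - (t - (τ : Fin d → ℝ)) ∈ Ω ∧ γ (y + (τ : Fin d → ℝ)) = (τ : Fin d → ℝ)) := by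
    intro τ y
    have he : y - (t - (τ : Fin d → ℝ)) + t = y + (τ : Fin d → ℝ) := by abel
    simp only [hC, Set.mem_preimage, Set.mem_inter_iff, hA, Set.mem_singleton_iff, he]
  -- tiling gives a unique translate
  have htile' : ∀ᵐ w ∂(volume : Measure (Fin d → ℝ)), ∃! σ : T, w - (σ : Fin d → ℝ) ∈ Ω := by
    filter_upwards [htile] with w hw
    have h01 : ∀ σ : T, Set.indicator Ω (fun _ => (1:ℝ)) (w - (σ : Fin d → ℝ)) = 0 ∨
        Set.indicator Ω (fun _ => (1:ℝ)) (w - (σ : Fin d → ℝ)) = 1 := by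
      intro σ
      by_cases h : w - (σ : Fin d → ℝ) ∈ Ω
      · right; simp [Set.indicator_of_mem h]
      · left; simp [Set.indicator_of_notMem h]
    have hiff : ∀ σ : T, (Set.indicator Ω (fun _ => (1:ℝ)) (w - (σ : Fin d → ℝ)) = 1) ↔
        w - (σ : Fin d → ℝ) ∈ Ω := by
      intro σ
      by_cases h : w - (σ : Fin d → ℝ) ∈ Ω
      · simp [Set.indicator_of_mem h, h]
      · simp [Set.indicator_of_notMem h, h]
    obtain ⟨σ, hσ, huniq⟩ := aux_unique _ h01 hw
    exact ⟨σ, (hiff σ).1 hσ, fun σ' hσ' => huniq σ' ((hiff σ').2 hσ')⟩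
  have H1 : ∀ᵐ y ∂(volume : Measure (Fin d → ℝ)), ∃! σ : T, y + (-t) - (σ : Fin d → ℝ) ∈ Ω :=
    aux_ae_add htile' (-t)
  have H2 : ∀ᵐ y ∂(volume : Measure (Fin d → ℝ)),
      ∀ τ : T, (y + (τ : Fin d → ℝ)) - γ (y + (τ : Fin d → ℝ)) ∈ Ω :=
    ae_all_iff.2 fun τ => aux_ae_add hγΩ (τ : Fin d → ℝ)
  have H3 : ∀ᵐ y ∂(volume : Measure (Fin d → ℝ)),
      ∀ τ : T, ∃! σ : T, (y + (τ : Fin d → ℝ)) - (σ : Fin d → ℝ) ∈ Ω :=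
    ae_all_iff.2 fun τ => aux_ae_add htile' (τ : Fin d → ℝ)
  -- the good points
  have hgood : ∀ᵐ y ∂(volume : Measure (Fin d → ℝ)),
      (y ∈ Ω ↔ ∃ τ : T, y ∈ C τ) ∧ (∀ τ₁ τ₂ : T, y ∈ C τ₁ → y ∈ C τ₂ → τ₁ = τ₂) := by
    filter_upwards [H1, H2, H3] with y h1 h2 h3
    constructor
    · constructor
      · intro hyΩ
        obtain ⟨σ, hσ, -⟩ := h1
        refine ⟨-σ, (hmemC _ _).2 ⟨?_, ?_⟩⟩
        · have : y - (t - ((-σ : T) : Fin d → ℝ)) = y + (-t) - (σ : Fin d → ℝ) := by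
            push_cast; abel
          rw [this]; exact hσ
        · -- γ (y + (-σ)) = -σ
          set τ : T := -σ with hτ
          obtain ⟨σ', hσ', huniq⟩ := h3 τ
          have c1 : (⟨γ (y + (τ : Fin d → ℝ)), hγT _⟩ : T) = σ' := huniq _ (h2 τ)
          have c2 : τ = σ' := by
            apply huniq
            have : y + (τ : Fin d → ℝ) - (τ : Fin d → ℝ) = y := by abel
            rw [this]; exact hyΩ
          have := c1.trans c2.symm
          exact congrArg Subtype.val this
      · rintro ⟨τ, hτ⟩
        obtain ⟨hτ1, hτ2⟩ := (hmemC _ _).1 hτ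
        have := h2 τ
        rw [hτ2] at this
        have he : y + (τ : Fin d → ℝ) - (τ : Fin d → ℝ) = y := by abel
        rwa [he] at this
    · intro τ₁ τ₂ hy1 hy2
      obtain ⟨ha1, -⟩ := (hmemC _ _).1 hy1
      obtain ⟨ha2, -⟩ := (hmemC _ _).1 hy2
      obtain ⟨σ, hσ, huniq⟩ := h1
      have k1 : (-τ₁ : T) = σ := by
        apply huniq
        have : y + (-t) - ((-τ₁ : T) : Fin d → ℝ) = y - (t - (τ₁ : Fin d → ℝ)) := by
          push_cast; abel
        rw [this]; exact ha1
      have k2 : (-τ₂ : T) = σ := by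
        apply huniq
        have : y + (-t) - ((-τ₂ : T) : Fin d → ℝ) = y - (t - (τ₂ : Fin d → ℝ)) := by
          push_cast; abel
        rw [this]; exact ha2
      have := k1.trans k2.symm
      exact neg_injective this
  obtain ⟨Z, hZsub, hZmeas, hZnull⟩ := exists_measurable_superset_of_null (ae_iff.1 hgood)
  have hZgood : ∀ y ∉ Z,
      (y ∈ Ω ↔ ∃ τ : T, y ∈ C τ) ∧ (∀ τ₁ τ₂ : T, y ∈ C τ₁ → y ∈ C τ₂ → τ₁ = τ₂) := by
    intro y hy
    by_contra h
    exact hy (hZsub h)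
  -- main measure identity
  have hmap : (volume.restrict Ω).map Φ = volume.restrict Ω := by
    refine Measure.ext fun B hB => ?_
    rw [Measure.map_apply hΦmeas hB, Measure.restrict_apply hB,
      Measure.restrict_apply (hΦmeas hB)]
    -- decompose the source
    have hsrc : Φ ⁻¹' B ∩ Ω = ⋃ τ : T, (Φ ⁻¹' B ∩ Ω ∩ A τ) := by
      ext x
      simp only [Set.mem_iUnion, Set.mem_inter_iff]
      constructor
      · rintro ⟨hb, ho⟩
        exact ⟨⟨γ (x + t), hγT _⟩, ⟨hb, ho⟩, rfl⟩
      · rintro ⟨τ, ⟨hb, ho⟩, -⟩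
        exact ⟨hb, ho⟩
    have hdisjA : Pairwise (Function.onFun Disjoint fun τ : T => Φ ⁻¹' B ∩ Ω ∩ A τ) := by
      intro τ₁ τ₂ hne
      refine Set.disjoint_left.2 fun x hx1 hx2 => hne ?_
      have e1 : γ (x + t) = (τ₁ : Fin d → ℝ) := hx1.2
      have e2 : γ (x + t) = (τ₂ : Fin d → ℝ) := hx2.2
      exact Subtype.ext (e1 ▸ e2)
    have hmeasBA : ∀ τ : T, MeasurableSet (Φ ⁻¹' B ∩ Ω ∩ A τ) :=
      fun τ => ((hΦmeas hB).inter hΩ).inter (hAmeas τ)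
    rw [hsrc, measure_iUnion hdisjA hmeasBA]
    -- each piece is a translate
    have hpiece : ∀ τ : T, volume (Φ ⁻¹' B ∩ Ω ∩ A τ) = volume (B ∩ C τ) := by
      intro τ
      have hset : Φ ⁻¹' B ∩ Ω ∩ A τ = (fun x => x + (t - (τ : Fin d → ℝ))) ⁻¹' (B ∩ C τ) := by
        ext x
        simp only [Set.mem_inter_iff, Set.mem_preimage, hA, Set.mem_singleton_iff, hmemC]
        constructor
        · rintro ⟨⟨hb, ho⟩, hg⟩
          have e0 : x + (t - (τ : Fin d → ℝ)) - (t - (τ : Fin d → ℝ)) = x := by abel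
          have e1 : x + (t - (τ : Fin d → ℝ)) + (τ : Fin d → ℝ) = x + t := by abel
          have e2 : Φ x = x + (t - (τ : Fin d → ℝ)) := by
            simp only [hΦ]; rw [hg]; abel
          refine ⟨by rw [← e2]; exact hb, by rw [e0]; exact ho, by rw [e1]; exact hg⟩
        · rintro ⟨hb, ho, hg⟩
          have e0 : x + (t - (τ : Fin d → ℝ)) - (t - (τ : Fin d → ℝ)) = x := by abel
          have e1 : x + (t - (τ : Fin d → ℝ)) + (τ : Fin d → ℝ) = x + t := by abel
          rw [e0] at ho
          rw [e1] at hg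
          have e2 : Φ x = x + (t - (τ : Fin d → ℝ)) := by
            simp only [hΦ]; rw [hg]; abel
          exact ⟨⟨by rw [e2]; exact hb, ho⟩, hg⟩
      rw [hset]
      exact (measurePreserving_add_right volume (t - (τ : Fin d → ℝ))).measure_preimage
        ((hB.inter (hCmeas τ)).nullMeasurableSet)
    simp_rw [hpiece]
    -- now the target side
    have hdiff : ∀ τ : T, volume (B ∩ C τ) = volume ((B ∩ C τ) \ Z) :=
      fun τ => (measure_diff_null hZnull).symm
    simp_rw [hdiff]
    have hdisjC : Pairwise (Function.onFun Disjoint fun τ : T => (B ∩ C τ) \ Z) := by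
      intro τ₁ τ₂ hne
      refine Set.disjoint_left.2 fun y hy1 hy2 => hne ?_
      exact (hZgood y hy1.2).2 τ₁ τ₂ hy1.1.2 hy2.1.2
    have hmeasC' : ∀ τ : T, MeasurableSet ((B ∩ C τ) \ Z) :=
      fun τ => ((hB.inter (hCmeas τ)).diff hZmeas)
    rw [← measure_iUnion hdisjC hmeasC']
    have hunion : (⋃ τ : T, ((B ∩ C τ) \ Z)) = (B ∩ Ω) \ Z := by
      ext y
      simp only [Set.mem_iUnion, Set.mem_diff, Set.mem_inter_iff]
      constructor
      · rintro ⟨τ, ⟨hb, hc⟩, hz⟩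
        exact ⟨⟨hb, ((hZgood y hz).1).2 ⟨τ, hc⟩⟩, hz⟩
      · rintro ⟨⟨hb, ho⟩, hz⟩
        obtain ⟨τ, hτ⟩ := ((hZgood y hz).1).1 ho
        exact ⟨τ, ⟨hb, hτ⟩, hz⟩
    rw [hunion, measure_diff_null hZnull]
  -- now the integral computation
  set E : (Fin d → ℝ) → ℂ := fun x =>
    Complex.exp ((((-2) * Real.pi * (∑ i, γs i * x i) : ℝ) : ℂ) * Complex.I) with hE
  set c : ℂ := Complex.exp (((2 * Real.pi * (∑ i, γs i * t i) : ℝ) : ℂ) * Complex.I) with hc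
  set g : (Fin d → ℝ) → ℂ := fun y => f y * E y with hg
  have hEcont : Continuous E := by
    apply Complex.continuous_exp.comp
    apply Continuous.mul _ continuous_const
    apply Complex.continuous_ofReal.comp
    apply Continuous.mul continuous_const
    exact continuous_finset_sum _ fun i _ => (continuous_const.mul (continuous_apply i))
  have hpt : ∀ x, f (Φ x) * E x = c * g (Φ x) := by
    intro x
    obtain ⟨n, hn⟩ := hγs (γ (x + t)) (hγT (x + t))
    have hdot : (∑ i, γs i * (Φ x) i)
        = (∑ i, γs i * x i) + (∑ i, γs i * t i) - (n : ℝ) := by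
      have hterm : ∀ i ∈ Finset.univ, γs i * (Φ x) i
          = (γs i * x i + γs i * t i) - γs i * γ (x + t) i := by
        intro i _
        simp only [hΦ, Pi.sub_apply, Pi.add_apply]
        ring
      rw [Finset.sum_congr rfl hterm, Finset.sum_sub_distrib, Finset.sum_add_distrib, hn]
    have hEe : c * E (Φ x) = E x := by
      simp only [hE, hc]
      rw [hdot, ← Complex.exp_add,
        show ((2 * Real.pi * (∑ i, γs i * t i) : ℝ) : ℂ) * Complex.I
            + (((-2) * Real.pi * ((∑ i, γs i * x i) + (∑ i, γs i * t i) - (n : ℝ)) : ℝ) : ℂ)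
              * Complex.I
          = (((-2) * Real.pi * (∑ i, γs i * x i) : ℝ) : ℂ) * Complex.I
            + (n : ℂ) * (2 * (Real.pi : ℂ) * Complex.I) from by push_cast; ring,
        Complex.exp_add, Complex.exp_int_mul_two_pi_mul_I, mul_one]
    rw [← hEe, hg]; ring
  have hgsm : AEStronglyMeasurable g (volume.restrict Ω) :=
    hf1.aestronglyMeasurable.mul hEcont.aestronglyMeasurable
  have hmi : ∫ y, g y ∂((volume.restrict Ω).map Φ) = ∫ x, g (Φ x) ∂(volume.restrict Ω) :=
    integral_map hΦmeas.aemeasurable (by rw [hmap]; exact hgsm)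
  calc ∫ x in Ω, f (x + t - γ (x + t)) * E x
      = ∫ x in Ω, c * g (Φ x) := integral_congr_ae (Filter.Eventually.of_forall fun x => hpt x)
    _ = c * ∫ x in Ω, g (Φ x) := integral_const_mul c _
    _ = c * ∫ y, g y ∂((volume.restrict Ω).map Φ) := by rw [hmi]
    _ = c * ∫ y in Ω, g y := by rw [hmap]
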